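/- Let U be a nonempty connected open subset of (0,∞) × (0,∞) ⊆ ℝ². Consider on U the metric g with components E = 0, F = (y²+x)/2, G = 0 (i.e. ds²_g = (y²+x) dx dy). Then every smooth Killing vector field of g on U is identically zero. -/

import Mathlib

noncomputable section

/-- The partial derivative of `f : ℝ² → ℝ` in the `i`-th coordinate direction
(`0 ↦ x`, `1 ↦ y`). -/
def pd (i : Fin 2) (f : ℝ × ℝ → ℝ) (p : ℝ × ℝ) : ℝ :=
  fderiv ℝ f p (if i = 0 then ((1 : ℝ), (0 : ℝ)) else ((0 : ℝ), (1 : ℝ)))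

/-- The components of the metric `g = E dx² + 2F dx dy + G dy²`. -/
def gc (E F G : ℝ × ℝ → ℝ) (i j : Fin 2) : ℝ × ℝ → ℝ := fun p =>
  if i = 0 then (if j = 0 then E p else F p) else (if j = 0 then F p else G p)

/-- The components of the inverse metric. -/
def gInv (E F G : ℝ × ℝ → ℝ) (i j : Fin 2) : ℝ × ℝ → ℝ := fun p =>
  (if i = 0 then (if j = 0 then G p else -F p) else (if j = 0 then -F p else E p)) /
    (E p * G p - F p ^ 2)

/-- The Christoffel symbols `Γ^i_{jk}` of the metric `(E,F,G)`. -/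
def Chr (E F G : ℝ × ℝ → ℝ) (i j k : Fin 2) : ℝ × ℝ → ℝ := fun p =>
  (1 / 2) * ∑ m : Fin 2, gInv E F G i m p *
    (pd j (gc E F G m k) p + pd k (gc E F G m j) p - pd m (gc E F G j k) p)

/-- The projective connection coefficient `K₀ = -Γ²₁₁`. -/
def pK0 (E F G : ℝ × ℝ → ℝ) : ℝ × ℝ → ℝ := fun p => - Chr E F G 1 0 0 p
/-- The projective connection coefficient `K₁ = Γ¹₁₁ - 2Γ²₁₂`. -/
def pK1 (E F G : ℝ × ℝ → ℝ) : ℝ × ℝ → ℝ := fun p => Chr E F G 0 0 0 p - 2 * Chr E F G 1 0 1 p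
/-- The projective connection coefficient `K₂ = -Γ²₂₂ + 2Γ¹₁₂`. -/
def pK2 (E F G : ℝ × ℝ → ℝ) : ℝ × ℝ → ℝ := fun p => - Chr E F G 1 1 1 p + 2 * Chr E F G 0 0 1 p
/-- The projective connection coefficient `K₃ = Γ¹₂₂`. -/
def pK3 (E F G : ℝ × ℝ → ℝ) : ℝ × ℝ → ℝ := fun p => Chr E F G 0 1 1 p

/-- The linear system (12). -/
def Sys12 (K₀ K₁ K₂ K₃ a11 a12 a22 : ℝ × ℝ → ℝ) (U : Set (ℝ × ℝ)) : Prop :=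
  ∀ p ∈ U,
    pd 0 a11 p - (2/3) * K₁ p * a11 p + 2 * K₀ p * a12 p = 0 ∧
    pd 1 a11 p + 2 * pd 0 a12 p - (4/3) * K₂ p * a11 p + (2/3) * K₁ p * a12 p
      + 2 * K₀ p * a22 p = 0 ∧
    2 * pd 1 a12 p + pd 0 a22 p - 2 * K₃ p * a11 p - (2/3) * K₂ p * a12 p
      + (4/3) * K₁ p * a22 p = 0 ∧
    pd 1 a22 p - 2 * K₃ p * a12 p + (2/3) * K₂ p * a22 p = 0

/-- The components of a vector field `v = (v¹, v²)`. -/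
def vc (v1 v2 : ℝ × ℝ → ℝ) (m : Fin 2) : ℝ × ℝ → ℝ := fun p => if m = 0 then v1 p else v2 p

/-- `v = (v1, v2)` is a Killing vector field for the metric `(E,F,G)` on `U`. -/
def IsKilling (E F G v1 v2 : ℝ × ℝ → ℝ) (U : Set (ℝ × ℝ)) : Prop :=
  ∀ p ∈ U, ∀ i j : Fin 2,
    (∑ m : Fin 2, (vc v1 v2 m p * pd m (gc E F G i j) p
      + gc E F G m j p * pd i (vc v1 v2 m) p
      + gc E F G i m p * pd j (vc v1 v2 m) p)) = 0

section AuxStmt19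

variable {f g : ℝ × ℝ → ℝ} {p : ℝ × ℝ} {c : ℝ}

lemma pd_zero_on {U : Set (ℝ × ℝ)} (hU : IsOpen U) {w : ℝ × ℝ → ℝ}
    (h : ∀ q ∈ U, w q = 0) (hp : p ∈ U) (i : Fin 2) : pd i w p = 0 := by
  have hev : w =ᶠ[nhds p] fun _ => (0 : ℝ) := by
    filter_upwards [hU.mem_nhds hp] with q hq using h q hq
  rw [pd, hev.fderiv_eq]
  simp

lemma pd_add (i : Fin 2) (hf : DifferentiableAt ℝ f p) (hg : DifferentiableAt ℝ g p) :
    pd i (fun q => f q + g q) p = pd i f p + pd i g p := by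
  simp [pd, fderiv_fun_add hf hg]

lemma pd_mul (i : Fin 2) (hf : DifferentiableAt ℝ f p) (hg : DifferentiableAt ℝ g p) :
    pd i (fun q => f q * g q) p = pd i f p * g p + f p * pd i g p := by
  rw [pd, fderiv_fun_mul hf hg]
  simp [pd]; ring

lemma pd_const (i : Fin 2) : pd i (fun _ : ℝ × ℝ => c) p = 0 := by simp [pd]

lemma pd0_fst : pd 0 (fun q : ℝ × ℝ => q.1) p = 1 := by
  rw [pd, show (fun q : ℝ × ℝ => q.1) = Prod.fst from rfl, fderiv_fst]; simp

lemma pd1_fst : pd 1 (fun q : ℝ × ℝ => q.1) p = 0 := by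
  rw [pd, show (fun q : ℝ × ℝ => q.1) = Prod.fst from rfl, fderiv_fst]; simp

lemma pd0_snd : pd 0 (fun q : ℝ × ℝ => q.2) p = 0 := by
  rw [pd, show (fun q : ℝ × ℝ => q.2) = Prod.snd from rfl, fderiv_snd]; simp

lemma pd1_snd : pd 1 (fun q : ℝ × ℝ => q.2) p = 1 := by
  rw [pd, show (fun q : ℝ × ℝ => q.2) = Prod.snd from rfl, fderiv_snd]; simp

lemma pd_contDiffAt (h : ContDiffAt ℝ (⊤ : ℕ∞) f p) (i : Fin 2) :
    ContDiffAt ℝ (⊤ : ℕ∞) (pd i f) p := by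
  have h2 : ContDiffAt ℝ (⊤ : ℕ∞) (fderiv ℝ f) p := h.fderiv_right (by simp)
  exact h2.clm_apply contDiffAt_const

lemma pd_comm (h : ContDiffAt ℝ (⊤ : ℕ∞) f p) (i j : Fin 2) :
    pd i (pd j f) p = pd j (pd i f) p := by
  have hd : DifferentiableAt ℝ (fderiv ℝ f) p :=
    (h.fderiv_right (m := (⊤ : ℕ∞)) (by simp)).differentiableAt (by simp)
  have key : ∀ v w : ℝ × ℝ, fderiv ℝ (fun q => fderiv ℝ f q v) p w
      = fderiv ℝ (fderiv ℝ f) p w v := by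
    intro v w
    rw [fderiv_clm_apply hd (differentiableAt_const v)]
    simp
  have hs := h.isSymmSndFDerivAt (by simp only [minSmoothness_of_isRCLikeNormedField]; exact WithTop.coe_le_coe.mpr le_top)
  show fderiv ℝ (fun q => fderiv ℝ f q _) p _ = fderiv ℝ (fun q => fderiv ℝ f q _) p _
  rw [key, key]
  exact hs _ _

end AuxStmt19


/-- The metric of case 3d, `ds² = (y²+x)dxdy`, admits no nontrivial
Killing vector field on any nonempty connected open subset of `(0,∞)×(0,∞)`. -/
theorem stmt19
    (U : Set (ℝ × ℝ)) (hUopen : IsOpen U) (hUconn : IsConnected U)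
    (hUsub : U ⊆ (Set.Ioi 0 ×ˢ Set.Ioi 0 : Set (ℝ × ℝ)))
    (E F G : ℝ × ℝ → ℝ)
    (hE : ∀ p, E p = 0)
    (hF : ∀ p, F p = (p.2 ^ 2 + p.1) / 2)
    (hG : ∀ p, G p = 0) :
    ∀ v1 v2 : ℝ × ℝ → ℝ, ContDiffOn ℝ (⊤ : ℕ∞) v1 U → ContDiffOn ℝ (⊤ : ℕ∞) v2 U →
      IsKilling E F G v1 v2 U → ∀ p ∈ U, v1 p = 0 ∧ v2 p = 0 := by
  have hEe : E = fun _ => (0 : ℝ) := funext hE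
  have hFe : F = fun p : ℝ × ℝ => (p.2 * p.2 + p.1) * (1/2) := funext fun p => by rw [hF]; ring
  have hGe : G = fun _ => (0 : ℝ) := funext hG
  subst hEe hFe hGe
  intro v1 v2 hv1 hv2 hK p hp
  -- componentwise metric functions
  set Fq : ℝ × ℝ → ℝ := fun p : ℝ × ℝ => (p.2 * p.2 + p.1) * (1/2) with hFq
  have g00 : gc (fun _ => 0) Fq (fun _ => 0) 0 0 = (fun _ : ℝ × ℝ => (0:ℝ)) := rfl
  have g01 : gc (fun _ => 0) Fq (fun _ => 0) 0 1 = Fq := rfl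
  have g10 : gc (fun _ => 0) Fq (fun _ => 0) 1 0 = Fq := rfl
  have g11 : gc (fun _ => 0) Fq (fun _ => 0) 1 1 = (fun _ : ℝ × ℝ => (0:ℝ)) := rfl
  have vc0 : vc v1 v2 0 = v1 := rfl
  have vc1 : vc v1 v2 1 = v2 := rfl
  -- positivity
  have hpos : ∀ q ∈ U, (0:ℝ) < q.1 ∧ (0:ℝ) < q.2 := by
    intro q hq
    have := hUsub hq
    simpa [Set.mem_prod] using this
  have hFpos : ∀ q ∈ U, 0 < Fq q := by
    intro q hq
    obtain ⟨h1, h2⟩ := hpos q hq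
    have : 0 < q.2 * q.2 + q.1 := by positivity
    simp only [hFq]
    linarith
  -- smoothness / differentiability package
  have s1 : ∀ q ∈ U, ContDiffAt ℝ (⊤ : ℕ∞) v1 q := fun q hq => hv1.contDiffAt (hUopen.mem_nhds hq)
  have s2 : ∀ q ∈ U, ContDiffAt ℝ (⊤ : ℕ∞) v2 q := fun q hq => hv2.contDiffAt (hUopen.mem_nhds hq)
  have sA : ∀ q ∈ U, ContDiffAt ℝ (⊤ : ℕ∞) (pd 0 v1) q := fun q hq => pd_contDiffAt (s1 q hq) 0
  have sD : ∀ q ∈ U, ContDiffAt ℝ (⊤ : ℕ∞) (pd 1 v2) q := fun q hq => pd_contDiffAt (s2 q hq) 1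
  have sAx : ∀ q ∈ U, ContDiffAt ℝ (⊤ : ℕ∞) (pd 0 (pd 0 v1)) q :=
    fun q hq => pd_contDiffAt (sA q hq) 0
  have sDy : ∀ q ∈ U, ContDiffAt ℝ (⊤ : ℕ∞) (pd 1 (pd 1 v2)) q :=
    fun q hq => pd_contDiffAt (sD q hq) 1
  -- first-order Killing equations
  have h1 : ∀ q ∈ U, pd 0 v2 q = 0 := by
    intro q hq
    have k00 := hK q hq 0 0
    simp only [Fin.sum_univ_two, g00, g01, g10, vc0, vc1, pd_const, zero_mul, mul_zero,
      add_zero, zero_add] at k00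
    have hne := (hFpos q hq).ne'
    rcases mul_eq_zero.1 (by linarith : Fq q * pd 0 v2 q = 0) with h | h
    · exact absurd h hne
    · exact h
  have h2 : ∀ q ∈ U, pd 1 v1 q = 0 := by
    intro q hq
    have k11 := hK q hq 1 1
    simp only [Fin.sum_univ_two, g01, g10, g11, vc0, vc1, pd_const, zero_mul, mul_zero,
      add_zero, zero_add] at k11
    have hne := (hFpos q hq).ne'
    rcases mul_eq_zero.1 (by linarith : Fq q * pd 1 v1 q = 0) with h | h
    · exact absurd h hne
    · exact h
  -- pd of Fq
  have pdFq0 : ∀ q : ℝ × ℝ, pd 0 Fq q = 1/2 := by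
    intro q
    rw [hFq]
    rw [pd_mul 0 (by fun_prop) (by fun_prop), pd_add 0 (by fun_prop) (by fun_prop),
      pd_mul 0 (by fun_prop) (by fun_prop), pd0_snd, pd0_fst, pd_const]
    ring
  have pdFq1 : ∀ q : ℝ × ℝ, pd 1 Fq q = q.2 := by
    intro q
    rw [hFq]
    rw [pd_mul 1 (by fun_prop) (by fun_prop), pd_add 1 (by fun_prop) (by fun_prop),
      pd_mul 1 (by fun_prop) (by fun_prop), pd1_snd, pd1_fst, pd_const]
    ring
  -- the mixed Killing equation
  have I1 : ∀ q ∈ U, v1 q + 2*q.2*v2 q + (q.2*q.2+q.1)*(pd 0 v1 q + pd 1 v2 q) = 0 := by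
    intro q hq
    have k01 := hK q hq 0 1
    simp only [Fin.sum_univ_two, g00, g01, g10, g11, vc0, vc1, pd_const, zero_mul, mul_zero,
      add_zero, zero_add] at k01
    rw [pdFq0 q, pdFq1 q] at k01
    have : Fq q = (q.2*q.2+q.1) * (1/2) := rfl
    rw [this] at k01
    linarith
  -- cross-derivative vanishing
  have hD0 : ∀ q ∈ U, pd 0 (pd 1 v2) q = 0 := by
    intro q hq
    rw [pd_comm (s2 q hq) 0 1]
    exact pd_zero_on hUopen h1 hq 1
  have hA1 : ∀ q ∈ U, pd 1 (pd 0 v1) q = 0 := by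
    intro q hq
    rw [pd_comm (s1 q hq) 1 0]
    exact pd_zero_on hUopen h2 hq 0
  have hAx1 : ∀ q ∈ U, pd 1 (pd 0 (pd 0 v1)) q = 0 := by
    intro q hq
    rw [pd_comm (sA q hq) 1 0]
    exact pd_zero_on hUopen hA1 hq 0
  have hDyx : ∀ q ∈ U, pd 0 (pd 1 (pd 1 v2)) q = 0 := by
    intro q hq
    rw [pd_comm (sD q hq) 0 1]
    exact pd_zero_on hUopen hD0 hq 1
  -- I2 : d/dx of I1
  have I2 : ∀ q ∈ U, 2*pd 0 v1 q + pd 1 v2 q + (q.2*q.2+q.1)*pd 0 (pd 0 v1) q = 0 := by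
    intro q hq
    have d1 := (s1 q hq).differentiableAt (by simp)
    have d2 := (s2 q hq).differentiableAt (by simp)
    have dA := (sA q hq).differentiableAt (by simp)
    have dD := (sD q hq).differentiableAt (by simp)
    have hz := pd_zero_on hUopen
      (w := fun r => v1 r + 2*r.2*v2 r + (r.2*r.2+r.1)*(pd 0 v1 r + pd 1 v2 r)) I1 hq 0
    rw [pd_add 0 (by fun_prop) (by fun_prop), pd_add 0 (by fun_prop) (by fun_prop),
      pd_mul 0 (by fun_prop) (by fun_prop), pd_mul 0 (by fun_prop) (by fun_prop),
      pd_mul 0 (by fun_prop) (by fun_prop), pd_add 0 (by fun_prop) (by fun_prop),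
      pd_add 0 (by fun_prop) (by fun_prop), pd_mul 0 (by fun_prop) (by fun_prop),
      pd_const, pd0_fst, pd0_snd] at hz
    rw [h1 q hq, hD0 q hq] at hz
    linarith [hz]
  -- I3 : d/dy of I2
  have I3 : ∀ q ∈ U, pd 1 (pd 1 v2) q + 2*q.2*pd 0 (pd 0 v1) q = 0 := by
    intro q hq
    have dA := (sA q hq).differentiableAt (by simp)
    have dD := (sD q hq).differentiableAt (by simp)
    have dAx := (sAx q hq).differentiableAt (by simp)
    have hz := pd_zero_on hUopen
      (w := fun r => 2*pd 0 v1 r + pd 1 v2 r + (r.2*r.2+r.1)*pd 0 (pd 0 v1) r) I2 hq 1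
    rw [pd_add 1 (by fun_prop) (by fun_prop), pd_add 1 (by fun_prop) (by fun_prop),
      pd_mul 1 (by fun_prop) (by fun_prop), pd_mul 1 (by fun_prop) (by fun_prop),
      pd_add 1 (by fun_prop) (by fun_prop), pd_mul 1 (by fun_prop) (by fun_prop),
      pd_const, pd1_fst, pd1_snd] at hz
    rw [hA1 q hq, hAx1 q hq] at hz
    linarith [hz]
  -- I4 : d/dx of I2
  have I4 : ∀ q ∈ U, 3*pd 0 (pd 0 v1) q + (q.2*q.2+q.1)*pd 0 (pd 0 (pd 0 v1)) q = 0 := by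
    intro q hq
    have dA := (sA q hq).differentiableAt (by simp)
    have dD := (sD q hq).differentiableAt (by simp)
    have dAx := (sAx q hq).differentiableAt (by simp)
    have hz := pd_zero_on hUopen
      (w := fun r => 2*pd 0 v1 r + pd 1 v2 r + (r.2*r.2+r.1)*pd 0 (pd 0 v1) r) I2 hq 0
    rw [pd_add 0 (by fun_prop) (by fun_prop), pd_add 0 (by fun_prop) (by fun_prop),
      pd_mul 0 (by fun_prop) (by fun_prop), pd_mul 0 (by fun_prop) (by fun_prop),
      pd_add 0 (by fun_prop) (by fun_prop), pd_mul 0 (by fun_prop) (by fun_prop),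
      pd_const, pd0_fst, pd0_snd] at hz
    rw [hD0 q hq] at hz
    linarith [hz]
  -- I5 : d/dx of I3 gives vanishing of the second x-derivative of pd 0 v1
  have hAxx : ∀ q ∈ U, pd 0 (pd 0 (pd 0 v1)) q = 0 := by
    intro q hq
    have dAx := (sAx q hq).differentiableAt (by simp)
    have dDy := (sDy q hq).differentiableAt (by simp)
    have hz := pd_zero_on hUopen
      (w := fun r => pd 1 (pd 1 v2) r + 2*r.2*pd 0 (pd 0 v1) r) I3 hq 0
    rw [pd_add 0 (by fun_prop) (by fun_prop), pd_mul 0 (by fun_prop) (by fun_prop),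
      pd_mul 0 (by fun_prop) (by fun_prop), pd_const, pd0_snd] at hz
    rw [hDyx q hq] at hz
    have hy := (hpos q hq).2
    have h2y : (0:ℝ) < 2*q.2 := by linarith
    have : 2*q.2 * pd 0 (pd 0 (pd 0 v1)) q = 0 := by linarith
    rcases mul_eq_zero.1 this with h | h
    · exact absurd h h2y.ne'
    · exact h
  -- hence pd 0 (pd 0 v1) = 0 on U
  have hAx0 : ∀ q ∈ U, pd 0 (pd 0 v1) q = 0 := by
    intro q hq
    have := I4 q hq
    rw [hAxx q hq] at this
    linarith
  -- and pd 1 (pd 1 v2) = 0 on U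
  have hDy0 : ∀ q ∈ U, pd 1 (pd 1 v2) q = 0 := by
    intro q hq
    have := I3 q hq
    rw [hAx0 q hq] at this
    linarith
  -- I2 simplifies : 2 A + D = 0 on U
  have I2' : ∀ q ∈ U, 2*pd 0 v1 q + pd 1 v2 q = 0 := by
    intro q hq
    have := I2 q hq
    rw [hAx0 q hq] at this
    linarith
  -- I6 : d/dy of I1
  have I6 : ∀ q ∈ U, v2 q + q.2*(pd 0 v1 q + 2*pd 1 v2 q) = 0 := by
    intro q hq
    have d1 := (s1 q hq).differentiableAt (by simp)
    have d2 := (s2 q hq).differentiableAt (by simp)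
    have dA := (sA q hq).differentiableAt (by simp)
    have dD := (sD q hq).differentiableAt (by simp)
    have hz := pd_zero_on hUopen
      (w := fun r => v1 r + 2*r.2*v2 r + (r.2*r.2+r.1)*(pd 0 v1 r + pd 1 v2 r)) I1 hq 1
    rw [pd_add 1 (by fun_prop) (by fun_prop), pd_add 1 (by fun_prop) (by fun_prop),
      pd_mul 1 (by fun_prop) (by fun_prop), pd_mul 1 (by fun_prop) (by fun_prop),
      pd_mul 1 (by fun_prop) (by fun_prop), pd_add 1 (by fun_prop) (by fun_prop),
      pd_add 1 (by fun_prop) (by fun_prop), pd_mul 1 (by fun_prop) (by fun_prop),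
      pd_const, pd1_fst, pd1_snd] at hz
    rw [h2 q hq, hA1 q hq, hDy0 q hq] at hz
    have := I1 q hq
    linarith [hz]
  -- I7 : d/dy of I6
  have I7 : ∀ q ∈ U, pd 0 v1 q + 3*pd 1 v2 q = 0 := by
    intro q hq
    have d2 := (s2 q hq).differentiableAt (by simp)
    have dA := (sA q hq).differentiableAt (by simp)
    have dD := (sD q hq).differentiableAt (by simp)
    have hz := pd_zero_on hUopen
      (w := fun r => v2 r + r.2*(pd 0 v1 r + 2*pd 1 v2 r)) I6 hq 1
    rw [pd_add 1 (by fun_prop) (by fun_prop), pd_mul 1 (by fun_prop) (by fun_prop),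
      pd_add 1 (by fun_prop) (by fun_prop), pd_mul 1 (by fun_prop) (by fun_prop),
      pd_const, pd1_snd] at hz
    rw [hA1 q hq, hDy0 q hq] at hz
    linarith [hz]
  -- conclusion at p
  have hA : pd 0 v1 p = 0 := by
    have := I2' p hp; have := I7 p hp; linarith
  have hD : pd 1 v2 p = 0 := by
    have := I2' p hp; have := I7 p hp; linarith
  have hv2p : v2 p = 0 := by
    have := I6 p hp; rw [hA, hD] at this; linarith
  have hv1p : v1 p = 0 := by
    have := I1 p hp; rw [hA, hD, hv2p] at this; linarith
  exact ⟨hv1p, hv2p⟩
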